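/- (Reduction to a compact domain.) Assume the delegation model: S ⊆ ℝⁿ compact and convex, b : ℝⁿ → ℝ strictly concave, differentiable with Lipschitz-continuous gradient and b(a)/‖a‖ → −∞, h(s) = sup_{a∈ℝⁿ}(⟪a,s⟫ + b(a)), g : S → ℝⁿ continuous, κ > 0, and F a Borel probability measure on S with continuous density. For a convex U (which is differentiable Lebesgue-almost everywhere) define the principal's objective J(U) = ∫_S (⟪∇U(s), g(s) − κ·s⟫ + κ·U(s)) dF(s). Then there exists a compact set X ⊆ ℝⁿ with S ⊆ X such that sup { J(U) : U : ℝⁿ → ℝ convex, U(s) ≤ h(s) for all s ∈ ℝⁿ } = sup { J(U) : U : ℝⁿ → ℝ convex, U(s) ≤ h(s) for all s ∈ X }, and for every maximizer U of the second problem there is a maximizer Ũ of the first problem with Ũ = U on S. -/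

import Mathlib

open MeasureTheory Filter Topology
open scoped RealInnerProductSpace

noncomputable section

/-- The first-best payoff `h(s) = sup_{a ∈ ℝⁿ} (⟪a,s⟫ + b(a))`. -/
def firstBest {n : ℕ} (b : EuclideanSpace ℝ (Fin n) → ℝ)
    (s : EuclideanSpace ℝ (Fin n)) : ℝ :=
  sSup (Set.range fun a : EuclideanSpace ℝ (Fin n) => ⟪a, s⟫ + b a)

/-- The principal's objective `J(U) = ∫_S (⟪∇U(s), g(s) − κ·s⟫ + κ·U(s)) dF(s)`,
where `∇U` is the gradient of `U` (a convex function is differentiable Lebesgue-a.e.,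
and the value of `gradient U` off the differentiability set does not affect `J`). -/
def principalObjective {n : ℕ} (S : Set (EuclideanSpace ℝ (Fin n)))
    (g : EuclideanSpace ℝ (Fin n) → EuclideanSpace ℝ (Fin n)) (κ : ℝ)
    (F : Measure (EuclideanSpace ℝ (Fin n)))
    (U : EuclideanSpace ℝ (Fin n) → ℝ) : ℝ :=
  ∫ s in S, (⟪gradient U s, g s - κ • s⟫ + κ * U s) ∂F

section Helpers

variable {n : ℕ}
local notation "E" => EuclideanSpace ℝ (Fin n)

/-- Tangent inequality for convex functions. -/
lemma grad_tangent_le {U : E → ℝ} (hU : ConvexOn ℝ Set.univ U)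
    {s : E} (hd : DifferentiableAt ℝ U s) (v : E) :
    ⟪gradient U s, v⟫ ≤ U (s + v) - U s := by
  have hline : ∀ t : ℝ, HasDerivAt (fun t : ℝ => s + t • v) v t := by
    intro t
    simpa using ((hasDerivAt_id t).smul_const v).const_add s
  set φ : ℝ → ℝ := fun t => U (s + t • v) with hφ
  have hφd : HasDerivAt φ (fderiv ℝ U s v) 0 := by
    have hd' : HasFDerivAt U (fderiv ℝ U s) (s + (0:ℝ) • v) := by
      simpa using hd.hasFDerivAt
    exact (hd'.comp_hasDerivAt 0 (hline 0))
  have hφconv : ConvexOn ℝ Set.univ φ := by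
    have h2 := hU.comp_affineMap (AffineMap.lineMap s (s + v) : ℝ →ᵃ[ℝ] E)
    have : φ = U ∘ (AffineMap.lineMap s (s + v) : ℝ →ᵃ[ℝ] E) := by
      funext t
      simp [φ, AffineMap.lineMap_apply, add_comm]
    rw [this]
    simpa using h2
  have h01 : (0:ℝ) < 1 := one_pos
  have := hφconv.le_slope_of_hasDerivAt (Set.mem_univ 0) (Set.mem_univ 1) h01 hφd
  rw [slope_def_field] at this
  have hval : fderiv ℝ U s v = ⟪gradient U s, v⟫ := by
    rw [gradient, ← InnerProductSpace.toDual_apply_apply,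
      (InnerProductSpace.toDual ℝ _).apply_symm_apply]
  rw [hval] at this
  simpa [φ] using this

lemma convex_lip_bound {U : E → ℝ} (hU : ConvexOn ℝ Set.univ U) {x y : E} (hxy : x ≠ y) {M : ℝ}
    (hz : U (x + ‖x - y‖⁻¹ • (x - y)) - U x ≤ M) : U x - U y ≤ M * ‖x - y‖ := by
  set d : ℝ := ‖x - y‖ with hdd
  have hd : 0 < d := by
    simpa [hdd] using sub_ne_zero_of_ne hxy
  set z : E := x + d⁻¹ • (x - y) with hz'
  have hcomb : x = (1/(d+1)) • y + (d/(d+1)) • z := by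
    rw [hz']
    match_scalars <;> field_simp <;> ring
  have hconv := hU.2 (Set.mem_univ y) (Set.mem_univ z)
    (by positivity : (0:ℝ) ≤ 1/(d+1)) (by positivity : (0:ℝ) ≤ d/(d+1))
    (by field_simp; ring)
  rw [← hcomb] at hconv
  have h1 : (d+1) * U x ≤ U y + d * U z := by
    have hd1 : (0:ℝ) < d + 1 := by linarith
    simp only [smul_eq_mul] at hconv
    have hmul := mul_le_mul_of_nonneg_left hconv (le_of_lt hd1)
    have e : (d+1) * (1/(d+1) * U y + d/(d+1) * U z) = U y + d * U z := by
      field_simp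
    linarith [hmul, e.le, e.ge]
  nlinarith [hz]

lemma fb_bound {b : E → ℝ} (hbc : Continuous b)
    (hblim : Tendsto (fun a => b a / ‖a‖) (cocompact (EuclideanSpace ℝ (Fin n))) atBot)
    (ρ : ℝ) :
    ∃ H, 0 ≤ H ∧ ∀ s : E, ‖s‖ ≤ ρ → ∀ a : E, ⟪a, s⟫ + b a ≤ H := by
  have hev : ∀ᶠ a in cocompact (EuclideanSpace ℝ (Fin n)), b a / ‖a‖ ≤ -(ρ+1) :=
    hblim.eventually (eventually_le_atBot _)
  obtain ⟨K, hK, hKs⟩ := mem_cocompact.mp hev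
  have hK' : IsCompact (K ∪ {0} : Set E) := hK.union isCompact_singleton
  obtain ⟨C, hC⟩ := (hK'.image_of_continuousOn
    ((continuous_norm.mul continuous_const).add hbc).continuousOn).bddAbove
  refine ⟨max C 0, le_max_right _ _, fun s hs a => ?_⟩
  have hinner : ⟪a, s⟫ ≤ ‖a‖ * ρ :=
    (real_inner_le_norm a s).trans (mul_le_mul_of_nonneg_left hs (norm_nonneg a))
  by_cases ha : a ∈ (K ∪ {0} : Set E)
  · have : ‖a‖ * ρ + b a ≤ C := hC (Set.mem_image_of_mem _ ha)
    calc ⟪a, s⟫ + b a ≤ ‖a‖ * ρ + b a := by linarith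
    _ ≤ C := this
    _ ≤ max C 0 := le_max_left _ _
  · have ha0 : a ≠ 0 := fun h => ha (Or.inr (by simp [h]))
    have hpos : (0:ℝ) < ‖a‖ := norm_pos_iff.mpr ha0
    have hdiv : b a / ‖a‖ ≤ -(ρ+1) := hKs (fun h => ha (Or.inl h))
    have hb : b a ≤ -(ρ+1) * ‖a‖ := by
      rw [div_le_iff₀ hpos] at hdiv; linarith [hdiv]
    have : ⟪a, s⟫ + b a ≤ 0 := by nlinarith [hpos]
    exact this.trans (le_max_right _ _)

end Helpers

set_option maxHeartbeats 4000000 in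
theorem stmt_9 {n : ℕ} (b : EuclideanSpace ℝ (Fin n) → ℝ)
    (hbconc : StrictConcaveOn ℝ Set.univ b)
    (hbdiff : Differentiable ℝ b)
    (K : NNReal) (hblip : LipschitzWith K (gradient b))
    (hblim : Tendsto (fun a => b a / ‖a‖)
      (cocompact (EuclideanSpace ℝ (Fin n))) atBot)
    (S : Set (EuclideanSpace ℝ (Fin n)))
    (hScpt : IsCompact S) (hSconv : Convex ℝ S) (hSne : S.Nonempty)
    (g : EuclideanSpace ℝ (Fin n) → EuclideanSpace ℝ (Fin n)) (hg : ContinuousOn g S)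
    (κ : ℝ) (hκ : 0 < κ)
    (f : EuclideanSpace ℝ (Fin n) → ℝ) (hfc : Continuous f) (hf0 : ∀ x, 0 ≤ f x)
    (F : Measure (EuclideanSpace ℝ (Fin n)))
    (hF : F = (volume.restrict S).withDensity (fun s => ENNReal.ofReal (f s)))
    (hFprob : IsProbabilityMeasure F) :
    ∃ X : Set (EuclideanSpace ℝ (Fin n)), IsCompact X ∧ S ⊆ X ∧
      sSup (principalObjective S g κ F ''
          {U | ConvexOn ℝ Set.univ U ∧ ∀ s, U s ≤ firstBest b s})
        = sSup (principalObjective S g κ F ''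
          {U | ConvexOn ℝ Set.univ U ∧ ∀ s ∈ X, U s ≤ firstBest b s}) ∧
      ∀ U : EuclideanSpace ℝ (Fin n) → ℝ,
        ConvexOn ℝ Set.univ U → (∀ s ∈ X, U s ≤ firstBest b s) →
        (∀ V : EuclideanSpace ℝ (Fin n) → ℝ,
          ConvexOn ℝ Set.univ V → (∀ s ∈ X, V s ≤ firstBest b s) →
          principalObjective S g κ F V ≤ principalObjective S g κ F U) →
        ∃ Ut : EuclideanSpace ℝ (Fin n) → ℝ,
          ConvexOn ℝ Set.univ Ut ∧ (∀ s, Ut s ≤ firstBest b s) ∧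
          (∀ V : EuclideanSpace ℝ (Fin n) → ℝ,
            ConvexOn ℝ Set.univ V → (∀ s, V s ≤ firstBest b s) →
            principalObjective S g κ F V ≤ principalObjective S g κ F Ut) ∧
          ∀ s ∈ S, Ut s = U s := by
  classical
  set h : EuclideanSpace ℝ (Fin n) → ℝ := firstBest b with hhdef
  have hbc : Continuous b := hbdiff.continuous
  -- basic facts about h
  have hbdd : ∀ s, BddAbove (Set.range fun a : EuclideanSpace ℝ (Fin n) => ⟪a, s⟫ + b a) := by
    intro s
    obtain ⟨H, _, hH⟩ := fb_bound hbc hblim ‖s‖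
    exact ⟨H, by rintro _ ⟨a, rfl⟩; exact hH s le_rfl a⟩
  have hle_h : ∀ a s : EuclideanSpace ℝ (Fin n), ⟪a, s⟫ + b a ≤ h s := fun a s =>
    le_csSup (hbdd s) ⟨a, rfl⟩
  have hb0_le : ∀ s, b 0 ≤ h s := fun s => by simpa using hle_h 0 s
  have h_le : ∀ (s : EuclideanSpace ℝ (Fin n)) (H : ℝ),
      (∀ a, ⟪a, s⟫ + b a ≤ H) → h s ≤ H := fun s H hH =>
    csSup_le (Set.range_nonempty _) (by rintro _ ⟨a, rfl⟩; exact hH a)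
  -- constants
  obtain ⟨D, hD0, hSD⟩ : ∃ D, 0 ≤ D ∧ ∀ s ∈ S, ‖s‖ ≤ D := by
    obtain ⟨D, hD⟩ := hScpt.isBounded.exists_norm_le
    exact ⟨max D 0, le_max_right _ _, fun s hs => (hD s hs).trans (le_max_left _ _)⟩
  obtain ⟨G, hG0, hGb⟩ : ∃ G, 0 ≤ G ∧ ∀ s ∈ S, ‖g s - κ • s‖ ≤ G := by
    obtain ⟨C, hC⟩ := hScpt.exists_bound_of_continuousOn
      ((hg.sub (continuous_const_smul κ).continuousOn))
    exact ⟨max C 0, le_max_right _ _, fun s hs => (hC s hs).trans (le_max_left _ _)⟩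
  set r₁ : ℝ := max (3*D+4) (2*G/κ) with hr₁def
  have hr₁1 : 3*D+4 ≤ r₁ := le_max_left _ _
  have hr₁pos : 0 < r₁ := lt_of_lt_of_le (by linarith) hr₁1
  have hGr : G / r₁ ≤ κ/2 := by
    rw [div_le_iff₀ hr₁pos]
    have h2 : 2*G/κ ≤ r₁ := le_max_right _ _
    rw [div_le_iff₀ hκ] at h2
    nlinarith
  obtain ⟨H₁, hH₁0, hH₁⟩ := fb_bound hbc hblim (D + r₁)
  have hhH₁ : ∀ x : EuclideanSpace ℝ (Fin n), ‖x‖ ≤ D + r₁ → h x ≤ H₁ := fun x hx =>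
    h_le x H₁ (hH₁ x hx)
  set C₀ : ℝ := 2*(1 + |κ * b 0| + G*H₁/r₁)/κ with hC₀def
  have hC₀0 : 0 ≤ C₀ := by positivity
  set C₁ : ℝ := 2*C₀ + H₁ with hC₁def
  have hC₁0 : 0 ≤ C₁ := by positivity
  set L : ℝ := H₁ + C₁ with hLdef
  have hL0 : 0 ≤ L := by positivity
  obtain ⟨a₀, ha₀mem, ha₀min⟩ := (isCompact_closedBall (0 : EuclideanSpace ℝ (Fin n))
    (L+1)).exists_isMinOn (Metric.nonempty_closedBall.mpr (by positivity)) hbc.continuousOn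
  set R₂ : ℝ := max (D + r₁) (H₁ + L*D - b a₀ + 1) with hR₂def
  have hR₂1 : D + r₁ ≤ R₂ := le_max_left _ _
  have hR₂pos : 0 < R₂ := by linarith
  set X : Set (EuclideanSpace ℝ (Fin n)) := Metric.closedBall 0 R₂ with hXdef
  have hmemX : ∀ x : EuclideanSpace ℝ (Fin n), ‖x‖ ≤ R₂ → x ∈ X := by
    intro x hx
    simpa [hXdef, Metric.mem_closedBall, dist_zero_right] using hx
  have hSX : S ⊆ X := fun s hs => hmemX s ((hSD s hs).trans (by linarith))
  -- superlinear lower bound on h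
  have hsuplin : ∀ x : EuclideanSpace ℝ (Fin n), R₂ ≤ ‖x‖ → H₁ + L*(‖x‖+D) ≤ h x := by
    intro x hx
    have hxpos : 0 < ‖x‖ := lt_of_lt_of_le hR₂pos hx
    have hxne : ‖x‖ ≠ 0 := ne_of_gt hxpos
    set a : EuclideanSpace ℝ (Fin n) := ((L+1)/‖x‖) • x with hadef
    have h1 : ⟪a, x⟫ = (L+1)*‖x‖ := by
      rw [hadef, real_inner_smul_left, real_inner_self_eq_norm_sq]
      field_simp
    have hanorm : ‖a‖ = L + 1 := by
      rw [hadef, norm_smul, Real.norm_eq_abs, abs_of_nonneg (by positivity)]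
      field_simp
    have h2 : b a₀ ≤ b a := ha₀min (by
      simp [Metric.mem_closedBall, dist_zero_right, hanorm])
    have h3 := hle_h a x
    have hxR : H₁ + L*D - b a₀ + 1 ≤ ‖x‖ := le_trans (le_max_right _ _) (hR₂def ▸ hx)
    nlinarith
  -- measure facts
  have hSm : MeasurableSet S := hScpt.isClosed.measurableSet
  have hFac : F ≪ volume.restrict S := by
    rw [hF]; exact withDensity_absolutelyContinuous _ _
  have hFSc : F Sᶜ = 0 := by
    apply hFac
    rw [Measure.restrict_apply hSm.compl]
    simp
  have hFS1 : F S = 1 := by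
    have hh := measure_add_measure_compl (μ := F) hSm
    rw [hFSc, add_zero] at hh
    simpa using hh
  have hfront : F (frontier S) = 0 := by
    apply hFac
    rw [Measure.restrict_apply isClosed_frontier.measurableSet]
    exact measure_mono_null Set.inter_subset_left (hSconv.addHaar_frontier volume)
  set J : (EuclideanSpace ℝ (Fin n) → ℝ) → ℝ := principalObjective S g κ F with hJdef
  -- J depends only on the values on S
  have hJeq : ∀ U V : EuclideanSpace ℝ (Fin n) → ℝ, (∀ s ∈ S, U s = V s) → J U = J V := by
    intro U V hUV
    apply setIntegral_congr_ae hSm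
    have hae : ∀ᵐ x ∂F, x ∉ frontier S := by
      simpa [MeasureTheory.ae_iff] using hfront
    filter_upwards [hae] with x hx hxS
    have hxint : x ∈ interior S := by
      rw [hScpt.isClosed.frontier_eq] at hx
      by_contra hi
      exact hx ⟨hxS, hi⟩
    have hnb : S ∈ 𝓝 x := mem_interior_iff_mem_nhds.mp hxint
    have heq : U =ᶠ[𝓝 x] V := Filter.eventuallyEq_of_mem hnb hUV
    have hfd : fderiv ℝ U x = fderiv ℝ V x := heq.fderiv_eq
    have hgrad : gradient U x = gradient V x := by rw [gradient, gradient, hfd]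
    rw [hgrad, hUV x hxS]
  -- value of J on constants
  have hJconst : J (fun _ => b 0) = κ * b 0 := by
    rw [hJdef]
    unfold principalObjective
    have : ∀ s : EuclideanSpace ℝ (Fin n),
        ⟪gradient (fun _ : EuclideanSpace ℝ (Fin n) => b 0) s, g s - κ • s⟫
          + κ * b 0 = κ * b 0 := by
      intro s
      rw [gradient_fun_const]
      simp
    rw [setIntegral_congr_fun hSm (fun s _ => this s)]
    rw [setIntegral_const, measureReal_def, hFS1]
    simp
  -- main extension lemma
  have main : ∀ U : EuclideanSpace ℝ (Fin n) → ℝ, ConvexOn ℝ Set.univ U →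
      (∀ s ∈ X, U s ≤ h s) → κ * b 0 - 1 ≤ J U →
      ∃ Ut : EuclideanSpace ℝ (Fin n) → ℝ, ConvexOn ℝ Set.univ Ut ∧
        (∀ s, Ut s ≤ h s) ∧ (∀ s ∈ S, Ut s = U s) := by
    intro U hUconv hUh hJU
    have hUcont : Continuous U := by
      rw [← continuousOn_univ]
      exact hUconv.continuousOn isOpen_univ
    have hUub : ∀ x : EuclideanSpace ℝ (Fin n), ‖x‖ ≤ D + r₁ → U x ≤ H₁ := fun x hx =>
      (hUh x (hmemX x (hx.trans hR₂1))).trans (hhH₁ x hx)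
    -- gradient bound
    have hgradb : ∀ s ∈ S, ‖gradient U s‖ ≤ (H₁ - U s)/r₁ := by
      intro s hs
      have hsD : ‖s‖ ≤ D := hSD s hs
      have hUsH : U s ≤ H₁ := hUub s (by linarith)
      have h0 : (0:ℝ) ≤ (H₁ - U s)/r₁ := div_nonneg (by linarith) hr₁pos.le
      by_cases hd : DifferentiableAt ℝ U s
      · set w : EuclideanSpace ℝ (Fin n) := gradient U s with hwdef
        by_cases hw : w = 0
        · rw [hw]; simpa using h0
        · have hwpos : 0 < ‖w‖ := norm_pos_iff.mpr hw
          set v : EuclideanSpace ℝ (Fin n) := (r₁/‖w‖) • w with hvdef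
          have hvnorm : ‖v‖ = r₁ := by
            rw [hvdef, norm_smul, Real.norm_eq_abs,
              abs_of_nonneg (by positivity)]
            field_simp
          have hinner : ⟪w, v⟫ = r₁ * ‖w‖ := by
            rw [hvdef, real_inner_smul_right, real_inner_self_eq_norm_sq]
            field_simp
          have htan := grad_tangent_le hUconv hd v
          rw [← hwdef, hinner] at htan
          have hsv : ‖s + v‖ ≤ D + r₁ := by
            calc ‖s + v‖ ≤ ‖s‖ + ‖v‖ := norm_add_le _ _
            _ ≤ D + r₁ := by rw [hvnorm]; linarith
          have hUsv : U (s + v) ≤ H₁ := hUub _ hsv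
          rw [le_div_iff₀ hr₁pos]
          nlinarith
      · rw [gradient_eq_zero_of_not_differentiableAt hd]
        simpa using h0
    -- integrability
    obtain ⟨CU, hCU⟩ := hScpt.exists_bound_of_continuousOn hUcont.continuousOn
    have hCU0 : 0 ≤ CU := le_trans (norm_nonneg _) (hCU hSne.choose hSne.choose_spec)
    have hUSint : IntegrableOn U S F := by
      apply Integrable.mono' (integrable_const CU) hUcont.aestronglyMeasurable
      exact (ae_restrict_iff' hSm).mpr (ae_of_all _ fun s hs => hCU s hs)
    have hmg : Measurable (fun s => gradient U s) :=
      ((InnerProductSpace.toDual ℝ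
        (EuclideanSpace ℝ (Fin n))).symm.continuous.measurable).comp
        (measurable_fderiv ℝ U)
    have hgm : AEStronglyMeasurable (fun s : EuclideanSpace ℝ (Fin n) => g s - κ • s)
        (F.restrict S) := by
      have h1 : AEMeasurable g (volume.restrict S) := hg.aemeasurable hSm
      have h2 : F.restrict S ≪ volume.restrict S := by
        have := hFac.restrict (s := S)
        rwa [Measure.restrict_restrict hSm, Set.inter_self] at this
      exact ((h1.mono_ac h2).sub (measurable_const_smul κ).aemeasurable).aestronglyMeasurable
    have hφm : AEStronglyMeasurable
        (fun s : EuclideanSpace ℝ (Fin n) => ⟪gradient U s, g s - κ • s⟫ + κ * U s)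
        (F.restrict S) :=
      ((hmg.aemeasurable.aestronglyMeasurable).inner hgm).add
        ((hUcont.const_smul κ).aestronglyMeasurable)
    have hφbound : ∀ s ∈ S, ‖⟪gradient U s, g s - κ • s⟫ + κ * U s‖
        ≤ (H₁ + CU)/r₁ * G + κ * CU := by
      intro s hs
      have h1 : |⟪gradient U s, g s - κ • s⟫| ≤ ‖gradient U s‖ * ‖g s - κ • s‖ :=
        abs_real_inner_le_norm _ _
      have h2 : ‖gradient U s‖ * ‖g s - κ • s‖ ≤ (H₁ - U s)/r₁ * G :=
        mul_le_mul (hgradb s hs) (hGb s hs) (norm_nonneg _)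
          (div_nonneg (by linarith [hUub s (by linarith [hSD s hs] : ‖s‖ ≤ D + r₁)]) hr₁pos.le)
      have h3 : |U s| ≤ CU := by
        have := hCU s hs; rwa [Real.norm_eq_abs] at this
      have h4 : (H₁ - U s)/r₁ ≤ (H₁ + CU)/r₁ := by
        gcongr
        linarith [abs_le.mp h3]
      rw [Real.norm_eq_abs]
      calc |⟪gradient U s, g s - κ • s⟫ + κ * U s|
          ≤ |⟪gradient U s, g s - κ • s⟫| + |κ * U s| := abs_add_le _ _
        _ ≤ (H₁ - U s)/r₁ * G + κ * CU := by
            have : |κ * U s| = κ * |U s| := by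
              rw [abs_mul, abs_of_nonneg hκ.le]
            rw [this]
            have := mul_le_mul_of_nonneg_left h3 hκ.le
            linarith
        _ ≤ (H₁ + CU)/r₁ * G + κ * CU := by
            have := mul_le_mul_of_nonneg_right h4 hG0
            linarith
    have hφint : IntegrableOn
        (fun s : EuclideanSpace ℝ (Fin n) => ⟪gradient U s, g s - κ • s⟫ + κ * U s) S F := by
      apply Integrable.mono' (integrable_const ((H₁ + CU)/r₁ * G + κ * CU)) hφm
      exact (ae_restrict_iff' hSm).mpr (ae_of_all _ fun s hs => hφbound s hs)
    -- the J upper bound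
    set I : ℝ := ∫ s in S, U s ∂F with hIdef
    have hψint : IntegrableOn
        (fun s : EuclideanSpace ℝ (Fin n) => G*H₁/r₁ + (κ - G/r₁) * U s) S F :=
      (integrable_const _).add (hUSint.const_mul _)
    have hJle : J U ≤ G*H₁/r₁ + (κ - G/r₁) * I := by
      have hmono : J U ≤ ∫ s in S, (G*H₁/r₁ + (κ - G/r₁) * U s) ∂F := by
        apply setIntegral_mono_on hφint hψint hSm
        intro s hs
        have hUsH : U s ≤ H₁ := hUub s (by linarith [hSD s hs])
        have i1 : ⟪gradient U s, g s - κ • s⟫ ≤ ‖gradient U s‖ * ‖g s - κ • s‖ :=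
          real_inner_le_norm _ _
        have i2 : ‖gradient U s‖ * ‖g s - κ • s‖ ≤ (H₁ - U s)/r₁ * G :=
          mul_le_mul (hgradb s hs) (hGb s hs) (norm_nonneg _)
            (div_nonneg (by linarith) hr₁pos.le)
        have i3 : (H₁ - U s)/r₁ * G + κ * U s = G*H₁/r₁ + (κ - G/r₁) * U s := by
          field_simp
          ring
        linarith
      have hcalc : ∫ s in S, (G*H₁/r₁ + (κ - G/r₁) * U s) ∂F
          = G*H₁/r₁ + (κ - G/r₁) * I := by
        rw [integral_add (integrable_const _) (hUSint.const_mul _)]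
        rw [setIntegral_const, measureReal_def, hFS1, integral_const_mul]
        simp [hIdef]
      linarith [hmono, hcalc.le, hcalc.ge]
    -- lower bound on the average, hence a point where U is not too small
    obtain ⟨s₀, hs₀S, hs₀max⟩ := hScpt.exists_isMaxOn hSne hUcont.continuousOn
    have hIs₀ : I ≤ U s₀ := by
      have : I ≤ ∫ _ in S, U s₀ ∂F :=
        setIntegral_mono_on hUSint (integrable_const _) hSm (fun s hs => hs₀max hs)
      rwa [setIntegral_const, measureReal_def, hFS1, ENNReal.toReal_one, one_smul] at this
    have hIC₀ : -C₀ ≤ I := by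
      have hβ1 : κ/2 ≤ κ - G/r₁ := by linarith
      have hN : κ * b 0 - 1 - G*H₁/r₁ ≥ -(1 + |κ * b 0| + G*H₁/r₁) := by
        have := neg_abs_le (κ * b 0)
        linarith
      have h2 : (κ - G/r₁) * I ≥ κ * b 0 - 1 - G*H₁/r₁ := by linarith
      by_cases hI : 0 ≤ I
      · linarith
      · push_neg at hI
        have h3 : (κ/2) * I ≥ (κ - G/r₁) * I := by nlinarith
        have h4 : (κ/2) * I ≥ -(1 + |κ * b 0| + G*H₁/r₁) := by linarith
        rw [hC₀def]
        have goal' : (-(2*(1 + |κ * b 0| + G*H₁/r₁)))/κ ≤ I := by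
          rw [div_le_iff₀ hκ]
          linarith
        calc -(2*(1 + |κ * b 0| + G*H₁/r₁)/κ)
            = (-(2*(1 + |κ * b 0| + G*H₁/r₁)))/κ := by ring
          _ ≤ I := goal'
    have hs₀C₀ : -C₀ ≤ U s₀ := le_trans hIC₀ hIs₀
    -- lower bound on the ball of radius D+1
    have hlow : ∀ x : EuclideanSpace ℝ (Fin n), ‖x‖ ≤ D + 1 → -C₁ ≤ U x := by
      intro x hx
      set y : EuclideanSpace ℝ (Fin n) := (2:ℝ) • s₀ - x with hydef
      have hy : ‖y‖ ≤ D + r₁ := by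
        calc ‖y‖ ≤ ‖(2:ℝ) • s₀‖ + ‖x‖ := norm_sub_le _ _
        _ = 2*‖s₀‖ + ‖x‖ := by rw [norm_smul]; simp
        _ ≤ 2*D + (D+1) := by have := hSD s₀ hs₀S; linarith
        _ ≤ D + r₁ := by linarith
      have hmid : s₀ = (1/2:ℝ) • x + (1/2:ℝ) • y := by
        rw [hydef]; module
      have hconv := hUconv.2 (Set.mem_univ x) (Set.mem_univ y)
        (by norm_num : (0:ℝ) ≤ 1/2) (by norm_num : (0:ℝ) ≤ 1/2) (by norm_num)
      rw [← hmid] at hconv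
      simp only [smul_eq_mul] at hconv
      have hUy : U y ≤ H₁ := hUub y hy
      linarith
    -- one-sided Lipschitz bound from points of S
    have hLip : ∀ x ∈ S, ∀ y : EuclideanSpace ℝ (Fin n), U x - U y ≤ L * ‖x - y‖ := by
      intro x hx y
      rcases eq_or_ne x y with rfl|hxy
      · simp
      · apply convex_lip_bound hUconv hxy
        have hzn : ‖x + ‖x - y‖⁻¹ • (x - y)‖ ≤ D + 1 := by
          have hxy' : x - y ≠ 0 := sub_ne_zero_of_ne hxy
          have hn0 : ‖x - y‖ ≠ 0 := norm_ne_zero_iff.mpr hxy'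
          have : ‖(‖x - y‖⁻¹ • (x - y) : EuclideanSpace ℝ (Fin n))‖ = 1 := by
            rw [norm_smul, Real.norm_eq_abs, abs_of_nonneg (by positivity)]
            field_simp
          calc ‖x + ‖x - y‖⁻¹ • (x - y)‖ ≤ ‖x‖ + 1 := by
                rw [← this]; exact norm_add_le _ _
          _ ≤ D + 1 := by linarith [hSD x hx]
        have h1 : U (x + ‖x - y‖⁻¹ • (x - y)) ≤ H₁ := hUub _ (by linarith)
        have h2 : -C₁ ≤ U x := hlow x (by linarith [hSD x hx])
        linarith
    -- the extension by inf-convolution over X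
    set Ut : EuclideanSpace ℝ (Fin n) → ℝ :=
      fun x => sInf ((fun y => U y + L * ‖x - y‖) '' X) with hUtdef
    have hne : ∀ x : EuclideanSpace ℝ (Fin n),
        ((fun y => U y + L * ‖x - y‖) '' X).Nonempty :=
      fun x => ⟨_, Set.mem_image_of_mem _ (hSX hs₀S)⟩
    have hlb : ∀ x : EuclideanSpace ℝ (Fin n), ∀ z ∈ (fun y => U y + L * ‖x - y‖) '' X,
        U s₀ - L * ‖x - s₀‖ ≤ z := by
      rintro x _ ⟨y, hy, rfl⟩
      have h1 := hLip s₀ hs₀S y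
      have htri : ‖s₀ - y‖ ≤ ‖s₀ - x‖ + ‖x - y‖ := by
        have := norm_sub_le (s₀ - x) (y - x)
        simpa only [dist_eq_norm] using dist_triangle s₀ x y
      have h2 : L * ‖s₀ - y‖ ≤ L * (‖s₀ - x‖ + ‖x - y‖) :=
        mul_le_mul_of_nonneg_left htri hL0
      have h3 : L * ‖x - s₀‖ = L * ‖s₀ - x‖ := by rw [norm_sub_rev]
      show U s₀ - L * ‖x - s₀‖ ≤ U y + L * ‖x - y‖
      linarith
    have hbddB : ∀ x : EuclideanSpace ℝ (Fin n),
        BddBelow ((fun y => U y + L * ‖x - y‖) '' X) :=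
      fun x => ⟨_, fun z hz => hlb x z hz⟩
    have hUtle : ∀ x y : EuclideanSpace ℝ (Fin n), y ∈ X → Ut x ≤ U y + L * ‖x - y‖ :=
      fun x y hy => csInf_le (hbddB x) (Set.mem_image_of_mem _ hy)
    have hleUt : ∀ (x : EuclideanSpace ℝ (Fin n)) (w : ℝ),
        (∀ y ∈ X, w ≤ U y + L * ‖x - y‖) → w ≤ Ut x :=
      fun x w hw => le_csInf (hne x) (by rintro _ ⟨y, hy, rfl⟩; exact hw y hy)
    have hUtS : ∀ s ∈ S, Ut s = U s := by
      intro s hs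
      apply le_antisymm
      · simpa using hUtle s s (hSX hs)
      · exact hleUt s (U s) (fun y hy => by linarith [hLip s hs y])
    have hUth : ∀ x, Ut x ≤ h x := by
      intro x
      by_cases hx : x ∈ X
      · exact le_trans (by simpa using hUtle x x hx) (hUh x hx)
      · have hxn : R₂ < ‖x‖ := by
          by_contra hc
          exact hx (hmemX x (not_lt.mp hc))
        have h1 : Ut x ≤ U s₀ + L * ‖x - s₀‖ := hUtle x s₀ (hSX hs₀S)
        have h2 : U s₀ ≤ H₁ := hUub s₀ (by linarith [hSD s₀ hs₀S])
        have h3 : ‖x - s₀‖ ≤ ‖x‖ + D := by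
          calc ‖x - s₀‖ ≤ ‖x‖ + ‖s₀‖ := norm_sub_le _ _
          _ ≤ ‖x‖ + D := by linarith [hSD s₀ hs₀S]
        have h4 : L * ‖x - s₀‖ ≤ L * (‖x‖ + D) := mul_le_mul_of_nonneg_left h3 hL0
        have h5 := hsuplin x hxn.le
        linarith
    have hUtconv : ConvexOn ℝ Set.univ Ut := by
      refine ⟨convex_univ, ?_⟩
      intro x₁ _ x₂ _ p q hp hq hpq
      rcases hp.eq_or_lt with rfl|hp'
      · have hq1 : q = 1 := by linarith
        subst hq1; simp
      rcases hq.eq_or_lt with rfl|hq'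
      · have hp1 : p = 1 := by linarith
        subst hp1; simp
      apply le_of_forall_pos_le_add
      intro ε hε
      obtain ⟨z₁, hz₁mem, hz₁lt⟩ := exists_lt_of_csInf_lt (hne x₁)
        (show Ut x₁ < Ut x₁ + ε by linarith)
      obtain ⟨y₁, hy₁X, rfl⟩ := hz₁mem
      obtain ⟨z₂, hz₂mem, hz₂lt⟩ := exists_lt_of_csInf_lt (hne x₂)
        (show Ut x₂ < Ut x₂ + ε by linarith)
      obtain ⟨y₂, hy₂X, rfl⟩ := hz₂mem
      have hyX : p • y₁ + q • y₂ ∈ X := by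
        rw [hXdef]
        exact (convex_closedBall (0 : EuclideanSpace ℝ (Fin n)) R₂) hy₁X hy₂X hp hq hpq
      have key := hUtle (p • x₁ + q • x₂) _ hyX
      have hUy : U (p • y₁ + q • y₂) ≤ p * U y₁ + q * U y₂ := by
        have := hUconv.2 (Set.mem_univ y₁) (Set.mem_univ y₂) hp hq hpq
        simpa using this
      have hnorm : ‖(p • x₁ + q • x₂) - (p • y₁ + q • y₂)‖
          ≤ p*‖x₁ - y₁‖ + q*‖x₂ - y₂‖ := by
        have hsplit : (p • x₁ + q • x₂) - (p • y₁ + q • y₂)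
            = p • (x₁ - y₁) + q • (x₂ - y₂) := by module
        rw [hsplit]
        calc ‖p • (x₁ - y₁) + q • (x₂ - y₂)‖
            ≤ ‖p • (x₁ - y₁)‖ + ‖q • (x₂ - y₂)‖ := norm_add_le _ _
          _ = p*‖x₁ - y₁‖ + q*‖x₂ - y₂‖ := by
              rw [norm_smul, norm_smul, Real.norm_eq_abs, Real.norm_eq_abs,
                abs_of_nonneg hp, abs_of_nonneg hq]
      have hLn : L * ‖(p • x₁ + q • x₂) - (p • y₁ + q • y₂)‖
          ≤ L * (p*‖x₁ - y₁‖ + q*‖x₂ - y₂‖) := mul_le_mul_of_nonneg_left hnorm hL0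
      have hm1 : p * (U y₁ + L * ‖x₁ - y₁‖) ≤ p * (Ut x₁ + ε) :=
        mul_le_mul_of_nonneg_left hz₁lt.le hp
      have hm2 : q * (U y₂ + L * ‖x₂ - y₂‖) ≤ q * (Ut x₂ + ε) :=
        mul_le_mul_of_nonneg_left hz₂lt.le hq
      have hfin : Ut (p • x₁ + q • x₂) ≤ p * Ut x₁ + q * Ut x₂ + (p+q)*ε := by
        calc Ut (p • x₁ + q • x₂)
            ≤ U (p • y₁ + q • y₂) + L * ‖(p • x₁ + q • x₂) - (p • y₁ + q • y₂)‖ := key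
          _ ≤ (p * U y₁ + q * U y₂) + L * (p*‖x₁ - y₁‖ + q*‖x₂ - y₂‖) :=
              add_le_add hUy hLn
          _ = p * (U y₁ + L * ‖x₁ - y₁‖) + q * (U y₂ + L * ‖x₂ - y₂‖) := by ring
          _ ≤ p * (Ut x₁ + ε) + q * (Ut x₂ + ε) := add_le_add hm1 hm2
          _ = p * Ut x₁ + q * Ut x₂ + (p+q)*ε := by ring
      rw [hpq, one_mul] at hfin
      simpa [smul_eq_mul] using hfin
    exact ⟨Ut, hUtconv, hUth, hUtS⟩
  -- assembling the result
  refine ⟨X, hXdef ▸ isCompact_closedBall 0 R₂, hSX, ?_, ?_⟩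
  · -- equality of suprema
    set A := J '' {U | ConvexOn ℝ Set.univ U ∧ ∀ s, U s ≤ h s} with hAdef
    set B := J '' {U | ConvexOn ℝ Set.univ U ∧ ∀ s ∈ X, U s ≤ h s} with hBdef
    have hAB : A ⊆ B := Set.image_mono (fun U hU => ⟨hU.1, fun s _ => hU.2 s⟩)
    have hconstA : κ * b 0 ∈ A :=
      ⟨fun _ => b 0, ⟨convexOn_const _ convex_univ, fun s => hb0_le s⟩, hJconst⟩
    have hBA : ∀ z ∈ B, z ∈ A ∨ z ≤ κ * b 0 := by
      rintro z ⟨U, ⟨hUc, hUh⟩, rfl⟩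
      by_cases hz : κ * b 0 - 1 ≤ J U
      · obtain ⟨Ut, h1, h2, h3⟩ := main U hUc hUh hz
        exact Or.inl ⟨Ut, ⟨h1, h2⟩, hJeq Ut U h3⟩
      · exact Or.inr (by linarith [not_le.mp hz])
    by_cases hbB : BddAbove B
    · apply le_antisymm
      · exact csSup_le_csSup hbB ⟨_, hconstA⟩ hAB
      · apply csSup_le ⟨_, hAB hconstA⟩
        intro z hz
        rcases hBA z hz with hzA | hzle
        · exact le_csSup (hbB.mono hAB) hzA
        · exact hzle.trans (le_csSup (hbB.mono hAB) hconstA)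
    · have hbA : ¬ BddAbove A := by
        rintro ⟨M, hM⟩
        apply hbB
        refine ⟨max M (κ * b 0), ?_⟩
        intro z hz
        rcases hBA z hz with hzA | hzle
        · exact (hM hzA).trans (le_max_left _ _)
        · exact hzle.trans (le_max_right _ _)
      rw [Real.sSup_of_not_bddAbove hbA, Real.sSup_of_not_bddAbove hbB]
  · -- maximizers extend
    intro U hUc hUh hUmax
    have h1 : κ * b 0 - 1 ≤ J U := by
      have := hUmax (fun _ => b 0) (convexOn_const _ convex_univ) (fun s _ => hb0_le s)
      rw [hJconst] at this
      linarith
    obtain ⟨Ut, hc, hh2, hS2⟩ := main U hUc hUh h1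
    refine ⟨Ut, hc, hh2, ?_, hS2⟩
    intro V hVc hVh
    have hJUt : J Ut = J U := hJeq Ut U hS2
    have := hUmax V hVc (fun s _ => hVh s)
    rw [hJUt]
    exact this
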